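/- arXiv:2203.13624 — 3 statements merged into one kernel-verified Lean document; each statement's English description precedes it below -/
import Mathlib

section
/- Let φ : [0,∞) → [0,∞) be increasing with φ(0)=0, and suppose t ↦ φ(t)/t^p is L-almost increasing on (0,∞) for some p > 1 (i.e. φ(s)/s^p ≤ L φ(t)/t^p for 0 < s ≤ t). Then the conjugate φ*(s) = sup_{t>0}(st − φ(t)) satisfies: t ↦ φ*(t)/t^{p'} is almost decreasing on (0,∞), where p' = p/(p−1), with a constant depending only on L and p. -/
/-- The conjugate `φ*(s) = sup_{t>0} (s·t − φ(t))` of a real-valued `φ`, with values in `[0,∞]`. -/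
noncomputable def conjPhi (φ : ℝ → ℝ) (s : ℝ) : ENNReal :=
  ⨆ (t : ℝ) (_ : 0 < t), ENNReal.ofReal (s * t - φ t)

/-- If `φ` is increasing with `φ(0)=0` and `t ↦ φ(t)/t^p` is `L`-almost increasing for some
`p > 1`, then `t ↦ φ*(t)/t^{p'}` is almost decreasing with constant depending only on `L, p`. -/
theorem stmt2 (φ : ℝ → ℝ) (p L : ℝ) (hp : 1 < p) (hL : 1 ≤ L)
    (hmono : MonotoneOn φ (Set.Ici 0)) (h0 : φ 0 = 0) (hnn : ∀ t, 0 ≤ t → 0 ≤ φ t)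
    (haInc : ∀ s t : ℝ, 0 < s → s ≤ t → φ s / s ^ p ≤ L * (φ t / t ^ p)) :
    ∃ C : ℝ, 1 ≤ C ∧ ∀ s t : ℝ, 0 < s → s ≤ t →
      conjPhi φ t / ENNReal.ofReal (t ^ (p / (p - 1))) ≤
        ENNReal.ofReal C * (conjPhi φ s / ENNReal.ofReal (s ^ (p / (p - 1)))) := by
  have hp1 : (0:ℝ) < p - 1 := by linarith
  have hL0 : (0:ℝ) < L := by linarith
  set r : ℝ := 1 / (p - 1) with hr
  have hr0 : 0 < r := by positivity
  have hq : p / (p - 1) = 1 + r := by rw [hr]; field_simp; ring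
  have hLr : (0:ℝ) < L ^ r := Real.rpow_pos_of_pos hL0 r
  have hLr1 : (1:ℝ) ≤ L ^ r := by
    calc (1:ℝ) = 1 ^ r := by simp
    _ ≤ L ^ r := Real.rpow_le_rpow zero_le_one hL hr0.le
  refine ⟨L ^ r, hLr1, ?_⟩
  intro s t hs hst
  have ht : 0 < t := lt_of_lt_of_le hs hst
  have hsr : (0:ℝ) < s ^ r := Real.rpow_pos_of_pos hs r
  have htr : (0:ℝ) < t ^ r := Real.rpow_pos_of_pos ht r
  set k : ℝ := s * s ^ r / (t * t ^ r * L ^ r) with hk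
  have hk0 : 0 < k := by positivity
  set lam : ℝ := (s / (L * t)) ^ r with hlam
  have hlam0 : 0 < lam := Real.rpow_pos_of_pos (by positivity) r
  have hlam1 : lam ≤ 1 := by
    apply Real.rpow_le_one (by positivity) _ hr0.le
    rw [div_le_one (by positivity)]
    nlinarith
  have hlamr : lam = s ^ r / (L ^ r * t ^ r) := by
    rw [hlam, Real.div_rpow hs.le (by positivity), Real.mul_rpow hL0.le ht.le]
  -- identity (1) : s * lam = k * t
  have hid1 : s * lam = k * t := by
    rw [hlamr, hk]; field_simp
  -- identity (2) : L * lam ^ p = k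
  have hrp : r * p = 1 + r := by rw [hr]; field_simp; ring
  have hid2 : L * lam ^ p = k := by
    have h1 : lam ^ p = (s / (L * t)) * ((s / (L * t)) ^ r) := by
      rw [hlam, ← Real.rpow_mul (by positivity : (0:ℝ) ≤ s / (L * t)), hrp,
        Real.rpow_add (by positivity), Real.rpow_one]
    rw [h1, ← hlam, hlamr, hk]
    field_simp
  -- main pointwise bound: conjPhi φ t ≤ k⁻¹ * conjPhi φ s
  have key : conjPhi φ t ≤ ENNReal.ofReal k⁻¹ * conjPhi φ s := by
    rw [conjPhi]
    refine iSup₂_le fun u hu => ?_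
    set v : ℝ := lam * u with hv
    have hv0 : 0 < v := by positivity
    have hvu : v ≤ u := by nlinarith
    have hup : (0:ℝ) < u ^ p := Real.rpow_pos_of_pos hu p
    have hvp : (0:ℝ) < v ^ p := Real.rpow_pos_of_pos hv0 p
    have hphi : φ v ≤ L * lam ^ p * φ u := by
      have h2 := haInc v u hv0 hvu
      rw [div_le_iff₀ hvp] at h2
      have h3 : v ^ p = lam ^ p * u ^ p := Real.mul_rpow hlam0.le hu.le
      calc φ v ≤ L * (φ u / u ^ p) * v ^ p := h2
      _ = L * lam ^ p * φ u := by rw [h3]; field_simp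
    have hstep : k * (t * u - φ u) ≤ s * v - φ v := by
      have hsv : s * v = k * (t * u) := by rw [hv, ← mul_assoc, hid1]; ring
      have hphi' : φ v ≤ k * φ u := hid2 ▸ hphi
      calc k * (t * u - φ u) = s * v - k * φ u := by rw [hsv]; ring
      _ ≤ s * v - φ v := by linarith
    have h4 : ENNReal.ofReal (k * (t * u - φ u)) ≤ conjPhi φ s := by
      refine le_trans (ENNReal.ofReal_le_ofReal hstep) ?_
      exact le_iSup₂ (f := fun w (_ : 0 < w) => ENNReal.ofReal (s * w - φ w)) v hv0
    have h5 : ENNReal.ofReal k * ENNReal.ofReal (t * u - φ u) ≤ conjPhi φ s := by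
      rwa [← ENNReal.ofReal_mul hk0.le]
    calc ENNReal.ofReal (t * u - φ u)
        = ENNReal.ofReal k⁻¹ * (ENNReal.ofReal k * ENNReal.ofReal (t * u - φ u)) := by
          rw [← mul_assoc, ← ENNReal.ofReal_mul (by positivity), inv_mul_cancel₀ hk0.ne',
            ENNReal.ofReal_one, one_mul]
    _ ≤ ENNReal.ofReal k⁻¹ * conjPhi φ s := mul_le_mul_right h5 _
  -- now divide
  have hts : t ^ (p / (p - 1)) = t * t ^ r := by
    rw [hq, Real.rpow_add ht, Real.rpow_one]
  have hss : s ^ (p / (p - 1)) = s * s ^ r := by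
    rw [hq, Real.rpow_add hs, Real.rpow_one]
  have hkinv : k⁻¹ = L ^ r * (t * t ^ r) / (s * s ^ r) := by
    rw [hk]; field_simp
  rw [hts, hss, ENNReal.div_le_iff (by positivity) ENNReal.ofReal_ne_top]
  calc conjPhi φ t ≤ ENNReal.ofReal k⁻¹ * conjPhi φ s := key
  _ = ENNReal.ofReal (L ^ r) * (conjPhi φ s / ENNReal.ofReal (s * s ^ r)) *
        ENNReal.ofReal (t * t ^ r) := by
      rw [hkinv, div_eq_mul_inv, ENNReal.ofReal_mul (by positivity),
        ENNReal.ofReal_mul (by positivity), ENNReal.ofReal_inv_of_pos (by positivity),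
        ENNReal.div_eq_inv_mul]
      ring
end

section
/- Let φ : [0,∞) → [0,∞) be a weak Φ-function satisfying (aInc)_p with constant L_p and (aDec)_q with constant L_q, where 1 < p ≤ q < ∞, and let φ* be its conjugate. Then there is a constant C = C(p, q, L_p, L_q) such that φ*(φ(t)/t) ≤ C φ(t) for all t > 0. -/
open Filter Topology

/-- For a weak Φ-function `φ` satisfying `(aInc)_p` and `(aDec)_q` with `1 < p ≤ q < ∞`,
there is `C = C(p,q,L_p,L_q)` with `φ*(φ(t)/t) ≤ C φ(t)` for all `t > 0`. -/
theorem stmt6 (φ : ℝ → ℝ) (p q Lp Lq : ℝ) (hp : 1 < p) (hpq : p ≤ q) (hLp : 1 ≤ Lp) (hLq : 1 ≤ Lq)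
    (hmono : MonotoneOn φ (Set.Ici 0)) (h0 : φ 0 = 0) (hnn : ∀ t, 0 ≤ t → 0 ≤ φ t)
    (hlim0 : Tendsto φ (nhdsWithin 0 (Set.Ioi 0)) (nhds 0))
    (hliminf : Tendsto φ atTop atTop)
    (haInc : ∀ s t : ℝ, 0 < s → s ≤ t → φ s / s ^ p ≤ Lp * (φ t / t ^ p))
    (haDec : ∀ s t : ℝ, 0 < s → s ≤ t → φ t / t ^ q ≤ Lq * (φ s / s ^ q)) :
    ∃ C : ℝ, 0 < C ∧ ∀ t : ℝ, 0 < t →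
      conjPhi φ (φ t / t) ≤ ENNReal.ofReal (C * φ t) := by
  have hp1 : (0:ℝ) < p - 1 := by linarith
  have hLp0 : (0:ℝ) < Lp := by linarith
  set c := Lp ^ ((p - 1)⁻¹) with hcdef
  have hc1 : 1 ≤ c := Real.one_le_rpow hLp (by positivity)
  refine ⟨c, by linarith, fun t ht => ?_⟩
  rw [conjPhi]
  refine iSup₂_le fun u hu => ENNReal.ofReal_le_ofReal ?_
  have hφt := hnn t ht.le
  have hφu := hnn u hu.le
  rcases le_or_gt u t with h | h
  · have h1 : φ t / t * u ≤ φ t := by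
      rw [div_mul_eq_mul_div, div_le_iff₀ ht]
      exact mul_le_mul_of_nonneg_left h hφt
    nlinarith
  · -- t < u
    have hInc := haInc t u ht h.le
    set r := u / t with hr
    have hr1 : 1 < r := (one_lt_div ht).2 h
    have hr0 : 0 < r := by linarith
    have htp : (0:ℝ) < t ^ p := Real.rpow_pos_of_pos ht p
    have hup : (0:ℝ) < u ^ p := Real.rpow_pos_of_pos hu p
    have hrp : r ^ p = u ^ p / t ^ p := Real.div_rpow hu.le ht.le p
    have hrp0 : (0:ℝ) < r ^ p := Real.rpow_pos_of_pos hr0 p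
    -- φ u ≥ φ t * r^p / Lp
    have hkey : φ t * r ^ p ≤ Lp * φ u := by
      rw [div_le_iff₀ htp] at hInc
      have h5 : φ t * u ^ p ≤ Lp * φ u * t ^ p := by
        calc φ t * u ^ p ≤ Lp * (φ u / u ^ p) * t ^ p * u ^ p := by nlinarith
          _ = Lp * φ u * t ^ p := by field_simp
      rw [hrp, ← mul_div_assoc, div_le_iff₀ htp]
      exact h5
    have hlhs : φ t / t * u = φ t * r := by
      rw [hr]; ring
    have hsplit : r ^ p = r * r ^ (p - 1) := by
      rw [← Real.rpow_one_add' hr0.le (by linarith)]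
      ring_nf
    have hrpm1 : (0:ℝ) < r ^ (p - 1) := Real.rpow_pos_of_pos hr0 _
    rcases le_or_gt Lp (r ^ (p - 1)) with hcase | hcase
    · -- r ≤ r^p / Lp, so LHS ≤ 0
      have h2 : Lp * r ≤ r ^ p := by
        rw [hsplit]
        nlinarith
      have h3 : φ t * (Lp * r) ≤ φ t * r ^ p := mul_le_mul_of_nonneg_left h2 hφt
      have h4 : φ t / t * u - φ u ≤ 0 := by
        rw [hlhs]
        nlinarith
      nlinarith
    · -- r < c
      have hrc : r < c := by
        have : r = (r ^ (p - 1)) ^ ((p - 1)⁻¹) := by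
          rw [← Real.rpow_mul hr0.le, mul_inv_cancel₀ hp1.ne', Real.rpow_one]
        rw [this, hcdef]
        exact Real.rpow_lt_rpow hrpm1.le hcase (by positivity)
      rw [hlhs]
      nlinarith
end

section
/- Let φ, ψ : [0,∞) → [0,∞) be weak Φ-functions each satisfying (aInc)_{p_k} with p_1, p_2 > 1 respectively and structural constants c_1, c_2 > 0, and let A : ℝⁿ → ℝⁿ satisfy c_1 φ(|ξ|) ≤ A(ξ)·ξ and |A(ξ)| ≤ c_2 φ(|ξ|)/|ξ| for ξ ≠ 0. Suppose (ξ_i) ⊂ ℝⁿ with |ξ_i| → ∞, η ∈ ℝⁿ fixed, and numbers I_i := (A(ξ_i) − A(η))·(ξ_i − η) bounded. Then one obtains a contradiction with (aInc)_p for p > 1: the sequence (ξ_i) must be bounded. Formally: under the above structure conditions, if sup_i I_i < ∞ then sup_i |ξ_i| < ∞. -/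
open Filter Topology

/-- Under the structure conditions `c₁ φ(|ξ|) ≤ A(ξ)·ξ` and `|A(ξ)| ≤ c₂ φ(|ξ|)/|ξ|` for an
operator governed by a weak Φ-function `φ` satisfying `(aInc)_p` with `p > 1`, if the
monotonicity pairings `I_i = (A(ξ_i) − A(η))·(ξ_i − η)` are bounded above, then the
sequence `(ξ_i)` is bounded. -/
theorem stmt11 {n : ℕ} (φ ψ : ℝ → ℝ) (p₁ p₂ L₁ L₂ c₁ c₂ : ℝ)
    (hp₁ : 1 < p₁) (hp₂ : 1 < p₂) (hL₁ : 1 ≤ L₁) (hL₂ : 1 ≤ L₂) (hc₁ : 0 < c₁) (hc₂ : 0 < c₂)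
    (hφmono : MonotoneOn φ (Set.Ici 0)) (hφ0 : φ 0 = 0) (hφnn : ∀ t, 0 ≤ t → 0 ≤ φ t)
    (hφlim : Filter.Tendsto φ Filter.atTop Filter.atTop)
    (hφInc : ∀ s t : ℝ, 0 < s → s ≤ t → φ s / s ^ p₁ ≤ L₁ * (φ t / t ^ p₁))
    (hψmono : MonotoneOn ψ (Set.Ici 0)) (hψ0 : ψ 0 = 0) (hψnn : ∀ t, 0 ≤ t → 0 ≤ ψ t)
    (hψlim : Filter.Tendsto ψ Filter.atTop Filter.atTop)
    (hψInc : ∀ s t : ℝ, 0 < s → s ≤ t → ψ s / s ^ p₂ ≤ L₂ * (ψ t / t ^ p₂))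
    (A : EuclideanSpace ℝ (Fin n) → EuclideanSpace ℝ (Fin n))
    (hcoer : ∀ ξ : EuclideanSpace ℝ (Fin n), c₁ * φ ‖ξ‖ ≤ inner (𝕜 := ℝ) (A ξ) ξ)
    (hgrowth : ∀ ξ : EuclideanSpace ℝ (Fin n), ξ ≠ 0 → ‖A ξ‖ ≤ c₂ * φ ‖ξ‖ / ‖ξ‖)
    (η : EuclideanSpace ℝ (Fin n)) (ξi : ℕ → EuclideanSpace ℝ (Fin n))
    (M : ℝ)
    (hI : ∀ i, inner (𝕜 := ℝ) (A (ξi i) - A η) (ξi i - η) ≤ M) :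
    ∃ M' : ℝ, ∀ i, ‖ξi i‖ ≤ M' := by
  have hh0 : (0:ℝ) ≤ ‖η‖ := norm_nonneg _
  have hB0 : (0:ℝ) ≤ ‖A η‖ := norm_nonneg _
  set h := ‖η‖ with hhdef
  set B := ‖A η‖ with hBdef
  -- a point where φ is positive
  obtain ⟨t₀, ht₀φ, ht₀1⟩ :=
    ((hφlim.eventually (eventually_ge_atTop (1:ℝ))).and (eventually_ge_atTop (1:ℝ))).exists
  have ht₀0 : (0:ℝ) < t₀ := lt_of_lt_of_le one_pos ht₀1
  set a : ℝ := φ t₀ / (L₁ * t₀ ^ p₁) with hadef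
  have hL₁0 : (0:ℝ) < L₁ := lt_of_lt_of_le one_pos hL₁
  have ht₀p : (0:ℝ) < t₀ ^ p₁ := Real.rpow_pos_of_pos ht₀0 _
  have ha0 : 0 < a := div_pos (lt_of_lt_of_le one_pos ht₀φ) (mul_pos hL₁0 ht₀p)
  have hlow : ∀ t : ℝ, t₀ ≤ t → a * t ^ p₁ ≤ φ t := by
    intro t ht
    have htp : (0:ℝ) < t ^ p₁ := Real.rpow_pos_of_pos (lt_of_lt_of_le ht₀0 ht) _
    have key := hφInc t₀ t ht₀0 ht
    have h1 : a ≤ φ t / t ^ p₁ := by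
      rw [hadef, div_le_div_iff₀ (mul_pos hL₁0 ht₀p) htp]
      calc φ t₀ * t ^ p₁ = (φ t₀ / t₀ ^ p₁) * t₀ ^ p₁ * t ^ p₁ := by
            field_simp
        _ ≤ (L₁ * (φ t / t ^ p₁)) * t₀ ^ p₁ * t ^ p₁ :=
            mul_le_mul_of_nonneg_right (mul_le_mul_of_nonneg_right key ht₀p.le) htp.le
        _ = φ t / t ^ p₁ * t ^ p₁ * (L₁ * t₀ ^ p₁) := by ring
        _ = φ t * (L₁ * t₀ ^ p₁) := by rw [div_mul_cancel₀ _ htp.ne']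
    calc a * t ^ p₁ ≤ (φ t / t ^ p₁) * t ^ p₁ := mul_le_mul_of_nonneg_right h1 htp.le
      _ = φ t := div_mul_cancel₀ _ htp.ne'
  -- the growing comparison function
  set g : ℝ → ℝ := fun t => c₁ / 2 * a * t ^ p₁ - B * t - B * h with hgdef
  have hg : Tendsto g atTop atTop := by
    have h1 : Tendsto (fun t : ℝ => t ^ (p₁ - 1)) atTop atTop :=
      tendsto_rpow_atTop (by linarith)
    have h2 : Tendsto (fun t : ℝ => c₁ / 2 * a * t ^ (p₁ - 1) - B) atTop atTop := by
      have := Filter.tendsto_atTop_add_const_right atTop (-B)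
        (h1.const_mul_atTop (show (0:ℝ) < c₁ / 2 * a by positivity))
      exact this.congr (fun x => by ring)
    have h3 : Tendsto (fun t : ℝ => t * (c₁ / 2 * a * t ^ (p₁ - 1) - B)) atTop atTop :=
      Filter.Tendsto.atTop_mul_atTop₀ tendsto_id h2
    have h4 : Tendsto (fun t : ℝ => t * (c₁ / 2 * a * t ^ (p₁ - 1) - B) - B * h) atTop atTop :=
      (Filter.tendsto_atTop_add_const_right atTop (-(B * h)) h3).congr (fun x => by ring)
    refine h4.congr' ?_
    filter_upwards [eventually_gt_atTop (0:ℝ)] with t ht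
    have hsplit : t ^ p₁ = t * t ^ (p₁ - 1) := by
      rw [show p₁ = 1 + (p₁ - 1) by ring, Real.rpow_add ht, Real.rpow_one]
      ring_nf
    rw [hgdef]
    simp only
    rw [hsplit]
    ring
  -- threshold T₀ handling the middle term
  set T₀ : ℝ := max t₀ (2 * c₂ * h / c₁ + 1) with hT₀def
  obtain ⟨T, hT⟩ := (((hg.eventually (eventually_gt_atTop M)).and
    (eventually_ge_atTop T₀)).and (eventually_ge_atTop (1:ℝ))).exists_forall_of_atTop
  refine ⟨T, fun i => ?_⟩
  by_contra hcon
  push_neg at hcon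
  set ξ := ξi i with hξdef
  set t := ‖ξ‖ with htdef
  have ht : T ≤ t := hcon.le
  obtain ⟨⟨hgt, hge⟩, hge1⟩ := hT t ht
  have ht0 : (0:ℝ) < t := lt_of_lt_of_le one_pos hge1
  have hξ0 : ξ ≠ 0 := by
    intro hz
    rw [htdef, hz, norm_zero] at ht0
    exact lt_irrefl _ ht0
  have htt₀ : t₀ ≤ t := le_trans (le_max_left _ _) hge
  have htmid : 2 * c₂ * h / c₁ + 1 ≤ t := le_trans (le_max_right _ _) hge
  have hφt : 0 ≤ φ t := hφnn t ht0.le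
  -- bound the inner product from below
  have hexp : inner (𝕜 := ℝ) (A ξ - A η) (ξ - η) =
      inner (𝕜 := ℝ) (A ξ) ξ - inner (𝕜 := ℝ) (A ξ) η - inner (𝕜 := ℝ) (A η) ξ
        + inner (𝕜 := ℝ) (A η) η := by
    rw [inner_sub_left, inner_sub_right, inner_sub_right]
    ring
  have hAξ : ‖A ξ‖ ≤ c₂ * φ t / t := hgrowth ξ hξ0
  have hb1 : inner (𝕜 := ℝ) (A ξ) η ≤ (c₂ * φ t / t) * h := by
    calc inner (𝕜 := ℝ) (A ξ) η ≤ ‖A ξ‖ * ‖η‖ := real_inner_le_norm _ _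
      _ ≤ (c₂ * φ t / t) * h := mul_le_mul_of_nonneg_right hAξ hh0
  have hb2 : -(B * t) ≤ inner (𝕜 := ℝ) (A η) ξ ∧ inner (𝕜 := ℝ) (A η) ξ ≤ B * t := by
    constructor
    · have := real_inner_le_norm (A η) (-ξ)
      rw [inner_neg_right, norm_neg] at this
      linarith
    · exact le_trans (real_inner_le_norm _ _) le_rfl
  have hb3 : -(B * h) ≤ inner (𝕜 := ℝ) (A η) η := by
    have := real_inner_le_norm (A η) (-η)
    rw [inner_neg_right, norm_neg] at this
    linarith
  have hmid : (c₂ * φ t / t) * h ≤ c₁ / 2 * φ t := by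
    have h1 : c₂ * h / t ≤ c₁ / 2 := by
      rw [div_le_div_iff₀ ht0 two_pos]
      have hcan : c₁ * (2 * c₂ * h / c₁) = 2 * c₂ * h := mul_div_cancel₀ _ hc₁.ne'
      nlinarith [mul_le_mul_of_nonneg_left htmid hc₁.le]
    calc (c₂ * φ t / t) * h = φ t * (c₂ * h / t) := by ring
      _ ≤ φ t * (c₁ / 2) := mul_le_mul_of_nonneg_left h1 hφt
      _ = c₁ / 2 * φ t := by ring
  have hchain : g t ≤ M := by
    have hIi := hI i
    rw [hexp] at hIi
    have hc : c₁ * φ t ≤ inner (𝕜 := ℝ) (A ξ) ξ := hcoer ξ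
    have hφlow : a * t ^ p₁ ≤ φ t := hlow t htt₀
    have hhalf : c₁ / 2 * a * t ^ p₁ ≤ c₁ / 2 * φ t := by
      rw [mul_assoc]
      exact mul_le_mul_of_nonneg_left hφlow (by positivity)
    show c₁ / 2 * a * t ^ p₁ - B * t - B * h ≤ M
    linarith [hb2.2]
  exact absurd hchain (not_le.mpr hgt)
end
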